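/- arXiv:2011.03849 — 5 statements merged into one kernel-verified Lean document; each statement's English description precedes it below -/
import Mathlib

section
/- For positive integers d₁,…,d_k and m, define R(d₁,…,d_k;m) = m·∏ᵢ dᵢ + Σ_{n=1}^{k} (−1)ⁿ Σ_{1≤i₁<⋯<i_n≤k} gcd(d_{i₁},…,d_{i_n})². If d_k = m·d₁⋯d_{k−1}, then R(d₁,…,d_k;m) = 0. -/
/-- `R(d₁,…,d_k;m) = m·∏ᵢ dᵢ + Σ_{n=1}^k (−1)ⁿ Σ_{1≤i₁<⋯<i_n≤k} gcd(d_{i₁},…,d_{i_n})²`,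
written as a sum over nonempty subsets `S` of the index set. -/
def Rval {k : ℕ} (d : Fin k → ℕ) (m : ℕ) : ℤ :=
  (m : ℤ) * ∏ i, (d i : ℤ) +
    ∑ S ∈ Finset.univ.powerset.filter (fun S : Finset (Fin k) => S.Nonempty),
      (-1) ^ S.card * ((S.gcd d : ℕ) : ℤ) ^ 2

theorem stmt0 (k m : ℕ) (hm : 0 < m) (d : Fin (k + 1) → ℕ) (hd : ∀ i, 0 < d i)
    (hmono : Monotone d)
    (hlast : d (Fin.last k) = m * ∏ i : Fin k, d i.castSucc) :
    Rval d m = 0 := by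
  classical
  set L := Fin.last k with hL
  have hdvd : ∀ j : Fin (k+1), j ≠ L → d j ∣ d L := by
    intro j hj
    rw [hlast]
    have h1 : j.val < k := Fin.val_lt_last hj
    have h2 : d j = d ((j.castLT h1).castSucc) := by rw [Fin.castSucc_castLT]
    rw [h2]
    exact Dvd.dvd.mul_left (Finset.dvd_prod_of_mem _ (Finset.mem_univ _)) m
  set s := (Finset.univ : Finset (Fin (k+1))).erase L with hs
  have hLs : L ∉ s := Finset.notMem_erase _ _
  have huniv : (Finset.univ : Finset (Fin (k+1))) = insert L s :=
    (Finset.insert_erase (Finset.mem_univ L)).symm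
  have hfilter : ∑ S ∈ Finset.univ.powerset.filter (fun S : Finset (Fin (k+1)) => S.Nonempty),
        (-1:ℤ) ^ S.card * ((S.gcd d : ℕ) : ℤ) ^ 2
      = ∑ S ∈ (Finset.univ : Finset (Fin (k+1))).powerset,
        (-1:ℤ) ^ S.card * ((S.gcd d : ℕ) : ℤ) ^ 2 := by
    apply Finset.sum_filter_of_ne
    intro S _ hne
    rw [Finset.nonempty_iff_ne_empty]
    intro h
    subst h
    simp at hne
  have hsum : ∑ S ∈ (Finset.univ : Finset (Fin (k+1))).powerset,
        (-1:ℤ) ^ S.card * ((S.gcd d : ℕ) : ℤ) ^ 2 = -((d L : ℤ))^2 := by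
    rw [huniv, Finset.sum_powerset_insert hLs, ← Finset.sum_add_distrib]
    rw [Finset.sum_eq_single (∅ : Finset (Fin (k+1)))]
    · simp
    · intro T hT hTne
      have hTs : T ⊆ s := Finset.mem_powerset.mp hT
      have hLT : L ∉ T := fun h => hLs (hTs h)
      have hTne' : T.Nonempty := Finset.nonempty_iff_ne_empty.mpr hTne
      have hgcd : (insert L T).gcd d = T.gcd d := by
        rw [Finset.gcd_insert]
        obtain ⟨j, hj⟩ := hTne'
        have hjL : j ≠ L := fun h => hLT (h ▸ hj)
        have hdl : T.gcd d ∣ d L := (Finset.gcd_dvd hj).trans (hdvd j hjL)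
        exact dvd_antisymm (gcd_dvd_right _ _) (dvd_gcd hdl dvd_rfl)
      rw [hgcd, Finset.card_insert_of_notMem hLT, pow_succ]
      ring
    · intro h
      simp at h
  have hprod : (m:ℤ) * ∏ i, (d i : ℤ) = ((d L : ℤ))^2 := by
    rw [Fin.prod_univ_castSucc, ← mul_assoc]
    have h3 : (m:ℤ) * ∏ i : Fin k, (d i.castSucc : ℤ) = (d L : ℤ) := by
      rw [hlast]; push_cast; ring
    rw [h3]; ring
  rw [Rval, hfilter, hsum, hprod]
  ring
end

section
/- For positive integers d₁,…,d_k and m with d₁ ≤ ⋯ ≤ d_k, if d_k > m·d₁⋯d_{k−1}, then R(d₁,…,d_k;m) < 0, where R(d₁,…,d_k;m) = m·∏ᵢ dᵢ + Σ_{n=1}^{k} (−1)ⁿ Σ_{1≤i₁<⋯<i_n≤k} gcd(d_{i₁},…,d_{i_n})². -/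
open Finset

lemma card_sol (P g : ℕ) [NeZero P] (hg : g ∣ P) :
    ((Finset.univ.filter fun x : ZMod P => (g : ZMod P) * x = 0).card) = g := by
  have hP : 0 < P := Nat.pos_of_ne_zero (NeZero.ne P)
  have hg0 : 0 < g := Nat.pos_of_dvd_of_pos hg hP
  obtain ⟨c, hc⟩ := hg
  have hc0 : 0 < c := by
    rcases Nat.eq_zero_or_pos c with h | h
    · subst h; simp [hc] at hP
    · exact h
  have key := Finset.card_nbij' (s := (Finset.univ.filter fun x : ZMod P => (g : ZMod P) * x = 0))
    (t := Finset.range g) (fun x => x.val / c) (fun y => ((c * y : ℕ) : ZMod P))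
    (fun x _ => Finset.mem_range.2 ((Nat.div_lt_iff_lt_mul hc0).2 (by have := ZMod.val_lt x; omega)))
    (fun y hy => by
      simp only [Finset.mem_coe, Finset.mem_filter, Finset.mem_univ, true_and]
      rw [← Nat.cast_mul, ← mul_assoc, ← hc, Nat.cast_mul, ZMod.natCast_self, zero_mul])
    (fun x hx => by
      simp only [Finset.mem_coe, Finset.mem_filter, Finset.mem_univ, true_and] at hx
      have hdvd : c ∣ x.val := by
        have h1 : ((g * x.val : ℕ) : ZMod P) = 0 := by
          rw [Nat.cast_mul, ZMod.natCast_val, ZMod.cast_id, hx]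
        rw [ZMod.natCast_eq_zero_iff] at h1
        have h2 : g * c ∣ g * x.val := by rw [← hc]; exact h1
        exact (mul_dvd_mul_iff_left hg0.ne').1 h2
      simp only
      rw [Nat.mul_div_cancel' hdvd, ZMod.natCast_val, ZMod.cast_id])
    (fun y hy => by
      simp only
      have hlt : c * y < P := by
        have := Finset.mem_range.1 hy
        calc c * y < c * g := (Nat.mul_lt_mul_left hc0).2 this
          _ = P := by rw [hc, mul_comm]
      rw [ZMod.val_cast_of_lt hlt, Nat.mul_div_cancel_left _ hc0])
  simpa using key

/-- Bezout-type: solutions of both `a·x=0` and `b·x=0` are solutions of `gcd(a,b)·x=0`. -/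
lemma gcd_mul_eq_zero {P : ℕ} (a b : ℕ) (x : ZMod P) (h1 : (a : ZMod P) * x = 0)
    (h2 : (b : ZMod P) * x = 0) : ((Nat.gcd a b : ℕ) : ZMod P) * x = 0 := by
  have hb : ((Nat.gcd a b : ℕ) : ZMod P) =
      (a : ZMod P) * ((Nat.gcdA a b : ℤ) : ZMod P) + (b : ZMod P) * ((Nat.gcdB a b : ℤ) : ZMod P) := by
    have := Nat.gcd_eq_gcd_ab a b
    have : (((Nat.gcd a b : ℤ)) : ZMod P) = (((a : ℤ) * Nat.gcdA a b + (b : ℤ) * Nat.gcdB a b : ℤ) : ZMod P) := by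
      rw [← this]
    push_cast at this ⊢
    rw [this]
  rw [hb, add_mul, mul_assoc, mul_assoc, mul_comm ((Nat.gcdA a b : ℤ) : ZMod P),
    mul_comm ((Nat.gcdB a b : ℤ) : ZMod P), ← mul_assoc, ← mul_assoc, h1, h2, zero_mul, zero_mul,
    add_zero]

lemma gcd_iff {P n : ℕ} (d : Fin n → ℕ) (S : Finset (Fin n)) (x : ZMod P) :
    (∀ i ∈ S, (d i : ZMod P) * x = 0) ↔ ((S.gcd d : ℕ) : ZMod P) * x = 0 := by
  induction S using Finset.induction_on with
  | empty => simp
  | @insert a s ha ih =>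
    rw [Finset.gcd_insert]
    constructor
    · intro h
      have h1 : (d a : ZMod P) * x = 0 := h a (Finset.mem_insert_self a s)
      have h2 := ih.1 fun i hi => h i (Finset.mem_insert_of_mem hi)
      exact gcd_mul_eq_zero _ _ _ h1 h2
    · intro h i hi
      have hd : GCDMonoid.gcd (d a) (s.gcd d) ∣ d i := by
        rcases Finset.mem_insert.1 hi with rfl | hi
        · exact gcd_dvd_left _ _
        · exact dvd_trans (gcd_dvd_right _ _) (Finset.gcd_dvd hi)
      obtain ⟨c, hcc⟩ := hd
      rw [hcc, Nat.cast_mul, mul_assoc, mul_comm (c : ZMod P), ← mul_assoc]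
      rw [show (GCDMonoid.gcd (d a) (s.gcd d) : ℕ) = Nat.gcd (d a) (s.gcd d) from rfl] at h ⊢
      rw [h, zero_mul]

theorem stmt1 (k m : ℕ) (hm : 0 < m) (d : Fin (k + 1) → ℕ) (hd : ∀ i, 0 < d i)
    (hmono : Monotone d)
    (hlast : d (Fin.last k) > m * ∏ i : Fin k, d i.castSucc) :
    Rval d m < 0 := by
  classical
  set P := ∏ i, d i with hPdef
  have hP : 0 < P := Finset.prod_pos (fun i _ => hd i)
  haveI : NeZero P := ⟨hP.ne'⟩
  set A : Fin (k+1) → Finset (ZMod P × ZMod P) :=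
    fun i => Finset.univ.filter
      (fun p => (d i : ZMod P) * p.1 = 0 ∧ (d i : ZMod P) * p.2 = 0) with hA
  have hcard : ∀ (S : Finset (Fin (k+1))) (hS : S.Nonempty),
      ((S.inf' hS A).card : ℤ) = ((S.gcd d : ℕ) : ℤ) ^ 2 := by
    intro S hS
    have hgdvd : (S.gcd d) ∣ P := by
      obtain ⟨i, hi⟩ := hS
      exact dvd_trans (Finset.gcd_dvd hi) (Finset.dvd_prod_of_mem d (Finset.mem_univ i))
    have hset : S.inf' hS A = Finset.univ.filter
        (fun p : ZMod P × ZMod P => ((S.gcd d : ℕ) : ZMod P) * p.1 = 0 ∧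
          ((S.gcd d : ℕ) : ZMod P) * p.2 = 0) := by
      ext p
      simp only [Finset.mem_inf', hA, Finset.mem_filter, Finset.mem_univ, true_and]
      constructor
      · intro h
        exact ⟨(gcd_iff d S p.1).1 (fun i hi => (h i hi).1),
          (gcd_iff d S p.2).1 (fun i hi => (h i hi).2)⟩
      · rintro ⟨h1, h2⟩ i hi
        obtain ⟨c, hcc⟩ := Finset.gcd_dvd (f := d) hi
        constructor <;>
          rw [show d i = (S.gcd d) * c from hcc, Nat.cast_mul, mul_assoc,
            mul_comm (c : ZMod P), ← mul_assoc]
        · rw [h1, zero_mul]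
        · rw [h2, zero_mul]
    rw [hset, show (Finset.univ : Finset (ZMod P × ZMod P)) = Finset.univ ×ˢ Finset.univ from
      (Finset.univ_product_univ).symm,
      Finset.filter_product (fun x : ZMod P => ((S.gcd d : ℕ) : ZMod P) * x = 0)
        (fun x : ZMod P => ((S.gcd d : ℕ) : ZMod P) * x = 0), Finset.card_product,
      card_sol P _ hgdvd]
    push_cast
    ring
  have hIE := Finset.inclusion_exclusion_card_biUnion (Finset.univ : Finset (Fin (k+1))) A
  have hsum : ((Finset.univ.biUnion A).card : ℤ)
      = ∑ S ∈ Finset.univ.powerset.filter (fun S : Finset (Fin (k+1)) => S.Nonempty),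
          (-1) ^ (S.card + 1) * ((S.gcd d : ℕ) : ℤ) ^ 2 := by
    rw [hIE, ← Finset.sum_coe_sort
      (Finset.univ.powerset.filter (fun S : Finset (Fin (k+1)) => S.Nonempty))
      (fun S => (-1:ℤ)^(S.card+1) * ((S.gcd d : ℕ) : ℤ)^2)]
    exact Fintype.sum_congr _ _ fun t => by
      rw [hcard t.1 (Finset.mem_filter.1 t.2).2]
  have hRval : Rval d m = (m : ℤ) * P - ((Finset.univ.biUnion A).card : ℤ) := by
    rw [Rval, hsum]
    have hprod : (∏ i, (d i : ℤ)) = (P : ℤ) := by rw [hPdef]; push_cast; rfl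
    have hneg : ∑ S ∈ Finset.univ.powerset.filter
          (fun S : Finset (Fin (k+1)) => S.Nonempty), (-1:ℤ) ^ S.card * ((S.gcd d : ℕ) : ℤ) ^ 2
        = - ∑ S ∈ Finset.univ.powerset.filter
          (fun S : Finset (Fin (k+1)) => S.Nonempty), (-1:ℤ) ^ (S.card + 1) * ((S.gcd d : ℕ) : ℤ) ^ 2 := by
      rw [← Finset.sum_neg_distrib]
      exact Finset.sum_congr rfl fun S _ => by ring
    rw [hprod, hneg]
    ring
  have hsub : A (Fin.last k) ⊆ Finset.univ.biUnion A :=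
    Finset.subset_biUnion_of_mem A (Finset.mem_univ _)
  have hAlast : ((A (Fin.last k)).card : ℤ) = ((d (Fin.last k) : ℕ) : ℤ) ^ 2 := by
    have h := hcard {Fin.last k} ⟨_, Finset.mem_singleton_self _⟩
    simpa using h
  have hge : ((d (Fin.last k) : ℕ) : ℤ) ^ 2 ≤ ((Finset.univ.biUnion A).card : ℤ) := by
    rw [← hAlast]
    exact_mod_cast Finset.card_le_card hsub
  have hlt : (m : ℤ) * P < ((d (Fin.last k) : ℕ) : ℤ) ^ 2 := by
    have hPP : m * P = (m * ∏ i : Fin k, d i.castSucc) * d (Fin.last k) := by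
      rw [hPdef, Fin.prod_univ_castSucc]
      ring
    have : m * P < d (Fin.last k) * d (Fin.last k) := by
      rw [hPP]
      exact (Nat.mul_lt_mul_right (hd _)).2 hlast
    calc (m : ℤ) * P = ((m * P : ℕ) : ℤ) := by push_cast; ring
      _ < ((d (Fin.last k) * d (Fin.last k) : ℕ) : ℤ) := by exact_mod_cast this
      _ = ((d (Fin.last k) : ℕ) : ℤ) ^ 2 := by push_cast; ring
  rw [hRval]
  linarith
end

section
/- For positive integers d₁,…,d_k and m ≥ 2 with 2 ≤ d₁ ≤ ⋯ ≤ d_k and k ≥ 2, if d_k ≤ (m·d₁⋯d_{k−1})/2, then R(d₁,…,d_k;m) > 0, where R is defined by R(d₁,…,d_k;m) = m·∏ᵢ dᵢ + Σ_{n=1}^{k} (−1)ⁿ Σ_{1≤i₁<⋯<i_n≤k} gcd(d_{i₁},…,d_{i_n})². -/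
open Finset ArithmeticFunction

/-- The Jordan totient `J₂` as an integer-valued arithmetic function. -/
noncomputable def J2 : ArithmeticFunction ℤ :=
  ArithmeticFunction.moebius *
    ((ArithmeticFunction.pow 2 : ArithmeticFunction ℕ) : ArithmeticFunction ℤ)

lemma J2_mult : J2.IsMultiplicative :=
  ArithmeticFunction.isMultiplicative_moebius.mul
    ArithmeticFunction.isMultiplicative_pow.natCast

lemma J2_one : J2 1 = 1 := J2_mult.map_one

lemma J2_sum_divisors {n : ℕ} (hn : n ≠ 0) : ∑ e ∈ n.divisors, J2 e = (n : ℤ) ^ 2 := by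
  have h : ((ArithmeticFunction.zeta : ArithmeticFunction ℕ) * J2 : ArithmeticFunction ℤ) n
      = ∑ e ∈ n.divisors, J2 e := ArithmeticFunction.coe_zeta_mul_apply
  rw [← h, J2, ← mul_assoc, ArithmeticFunction.coe_zeta_mul_moebius, one_mul,
    ArithmeticFunction.natCoe_apply, ArithmeticFunction.pow_apply]
  simp

lemma J2_prime_pow_nonneg {p : ℕ} (hp : p.Prime) (j : ℕ) : 0 ≤ J2 (p ^ j) := by
  rcases Nat.eq_zero_or_pos j with rfl | hj
  · simp [J2_one]
  have key : J2 (p ^ j) = ∑ e ∈ (p ^ j).divisors,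
      (ArithmeticFunction.moebius e) * ((p ^ j / e : ℕ) : ℤ) ^ 2 := by
    rw [J2, ArithmeticFunction.mul_apply,
      Nat.sum_divisorsAntidiagonal (fun x y => (ArithmeticFunction.moebius x) *
        (((ArithmeticFunction.pow 2 : ArithmeticFunction ℕ) : ArithmeticFunction ℤ) y))]
    refine Finset.sum_congr rfl fun e he => ?_
    rw [ArithmeticFunction.natCoe_apply, ArithmeticFunction.pow_apply]
    simp
  rw [key, Nat.sum_divisors_prime_pow hp, Finset.sum_range_succ']
  have hzero : ∀ b ∈ Finset.range j, b ≠ 0 →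
      (ArithmeticFunction.moebius (p ^ (b + 1))) * ((p ^ j / p ^ (b + 1) : ℕ) : ℤ) ^ 2 = 0 := by
    intro b _ hb
    rw [ArithmeticFunction.moebius_apply_prime_pow hp (Nat.succ_ne_zero b), if_neg (by omega)]
    ring
  rw [Finset.sum_eq_single_of_mem 0 (Finset.mem_range.2 hj) hzero]
  have h2 : (p ^ j / p ^ (0 + 1) : ℕ) ≤ (p ^ j / p ^ 0 : ℕ) := by
    simpa using Nat.div_le_self (p ^ j) p
  have h1 : ((p ^ j / p ^ (0 + 1) : ℕ) : ℤ) ^ 2 ≤ ((p ^ j / p ^ 0 : ℕ) : ℤ) ^ 2 :=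
    pow_le_pow_left₀ (Int.natCast_nonneg _) (Int.ofNat_le.2 h2) 2
  have hmu1 : ArithmeticFunction.moebius (p ^ (0 + 1)) = -1 := by
    simpa using ArithmeticFunction.moebius_apply_prime hp
  have hmu0 : ArithmeticFunction.moebius (p ^ 0) = 1 := by
    simp
  rw [hmu1, hmu0]
  nlinarith [h1]

lemma J2_nonneg (n : ℕ) : 0 ≤ J2 n := by
  rcases eq_or_ne n 0 with rfl | h0
  · simp
  rw [ArithmeticFunction.IsMultiplicative.multiplicative_factorization J2 J2_mult h0,
    Finsupp.prod]
  refine Finset.prod_nonneg fun p hp => ?_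
  exact J2_prime_pow_nonneg (Nat.prime_of_mem_primeFactors (by simpa using hp)) _

lemma sum_biUnion_le_int {ι α : Type*} [DecidableEq α] (s : Finset ι) (t : ι → Finset α)
    (f : α → ℤ) (hf : ∀ a, 0 ≤ f a) :
    ∑ a ∈ s.biUnion t, f a ≤ ∑ i ∈ s, ∑ a ∈ t i, f a := by
  classical
  induction s using Finset.induction_on with
  | empty => simp
  | insert _ _ hx ih =>
    rename_i x s
    rw [Finset.biUnion_insert, Finset.sum_insert hx]
    calc ∑ a ∈ t x ∪ s.biUnion t, f a
        ≤ ∑ a ∈ t x, f a + ∑ a ∈ s.biUnion t, f a := by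
          rw [← Finset.sum_union_inter]
          exact le_add_of_nonneg_right (Finset.sum_nonneg fun a _ => hf a)
      _ ≤ _ := add_le_add_right ih _

lemma fin_sum_le_prod : ∀ (n : ℕ) (f : Fin (n + 1) → ℕ), (∀ i, 2 ≤ f i) →
    ∑ i, f i ≤ ∏ i, f i := by
  intro n
  induction n with
  | zero => intro f hf; simp
  | succ n ih =>
    intro f hf
    rw [Fin.sum_univ_castSucc, Fin.prod_univ_castSucc]
    have h1 := ih (fun i => f i.castSucc) (fun i => hf _)
    have h2 : 2 ≤ ∏ i : Fin (n + 1), f i.castSucc :=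
      le_trans (hf _) (Finset.single_le_prod' (fun i _ => Nat.one_le_of_lt (hf i.castSucc))
        (Finset.mem_univ (0 : Fin (n + 1))))
    have h3 := hf (Fin.last (n + 1))
    nlinarith

theorem stmt2 (k m : ℕ) (hm : 2 ≤ m) (d : Fin (k + 2) → ℕ)
    (hd : 2 ≤ d 0) (hmono : Monotone d)
    (hlast : 2 * d (Fin.last (k + 1)) ≤ m * ∏ i : Fin (k + 1), d i.castSucc) :
    0 < Rval d m := by
  classical
  have hd2 : ∀ i, 2 ≤ d i := fun i => le_trans hd (hmono (Fin.zero_le i))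
  have hdne : ∀ i, d i ≠ 0 := fun i => by have := hd2 i; omega
  set D : Finset ℕ := Finset.univ.biUnion (fun i : Fin (k + 2) => (d i).divisors) with hD
  -- Step 2: the alternating sum equals -∑_{e∈D} J2 e
  have key : ∑ S ∈ Finset.univ.powerset.filter (fun S : Finset (Fin (k + 2)) => S.Nonempty),
      (-1 : ℤ) ^ S.card * ((S.gcd d : ℕ) : ℤ) ^ 2 = - ∑ e ∈ D, J2 e := by
    have hgcd : ∀ S : Finset (Fin (k + 2)), S.Nonempty →
        ((S.gcd d : ℕ) : ℤ) ^ 2 = ∑ e ∈ D.filter (fun e => ∀ i ∈ S, e ∣ d i), J2 e := by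
      intro S hS
      have hg0 : S.gcd d ≠ 0 := fun h =>
        hdne hS.choose (Finset.gcd_eq_zero_iff.1 h _ hS.choose_spec)
      rw [← J2_sum_divisors hg0]
      congr 1
      ext e
      simp only [Nat.mem_divisors, Finset.mem_filter, hD, Finset.mem_biUnion, Finset.mem_univ,
        true_and]
      constructor
      · rintro ⟨he, -⟩
        have h' : ∀ i ∈ S, e ∣ d i := fun i hi => he.trans (Finset.gcd_dvd hi)
        exact ⟨⟨hS.choose, h' _ hS.choose_spec, hdne _⟩, h'⟩
      · rintro ⟨-, h'⟩
        exact ⟨Finset.dvd_gcd h', hg0⟩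
    calc ∑ S ∈ Finset.univ.powerset.filter (fun S : Finset (Fin (k + 2)) => S.Nonempty),
          (-1 : ℤ) ^ S.card * ((S.gcd d : ℕ) : ℤ) ^ 2
        = ∑ S ∈ Finset.univ.powerset.filter (fun S : Finset (Fin (k + 2)) => S.Nonempty),
            ∑ e ∈ D, (if ∀ i ∈ S, e ∣ d i then (-1 : ℤ) ^ S.card * J2 e else 0) := by
          refine Finset.sum_congr rfl fun S hS => ?_
          have hSne : S.Nonempty := (Finset.mem_filter.1 hS).2
          rw [hgcd S hSne, Finset.mul_sum, ← Finset.sum_filter]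
      _ = ∑ e ∈ D, ∑ S ∈ Finset.univ.powerset.filter
            (fun S : Finset (Fin (k + 2)) => S.Nonempty),
            (if ∀ i ∈ S, e ∣ d i then (-1 : ℤ) ^ S.card * J2 e else 0) := Finset.sum_comm
      _ = ∑ e ∈ D, (-1) * J2 e := by
          refine Finset.sum_congr rfl fun e he => ?_
          obtain ⟨i0, -, hi0⟩ := Finset.mem_biUnion.1 (hD ▸ he)
          have hAne : (Finset.univ.filter (fun i : Fin (k + 2) => e ∣ d i)).Nonempty :=
            ⟨i0, Finset.mem_filter.2 ⟨Finset.mem_univ _, (Nat.mem_divisors.1 hi0).1⟩⟩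
          have hset : (Finset.univ.powerset.filter
                (fun S : Finset (Fin (k + 2)) => S.Nonempty)).filter
                (fun S => ∀ i ∈ S, e ∣ d i)
              = ((Finset.univ.filter (fun i : Fin (k + 2) => e ∣ d i)).powerset).filter
                (fun S => S.Nonempty) := by
            ext S
            simp only [Finset.mem_filter, Finset.mem_powerset, Finset.subset_iff,
              Finset.mem_univ, true_and, Finset.mem_filter]
            tauto
          have hsum : ∑ S ∈ ((Finset.univ.filter
              (fun i : Fin (k + 2) => e ∣ d i)).powerset).filter (fun S => S.Nonempty),
              (-1 : ℤ) ^ S.card = -1 := by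
            have h1 : ((Finset.univ.filter
                (fun i : Fin (k + 2) => e ∣ d i)).powerset).filter (fun S => S.Nonempty)
                = ((Finset.univ.filter
                  (fun i : Fin (k + 2) => e ∣ d i)).powerset).erase ∅ := by
              ext S
              simp [Finset.nonempty_iff_ne_empty, and_comm]
            rw [h1, Finset.sum_erase_eq_sub (Finset.empty_mem_powerset _),
              Finset.sum_powerset_neg_one_pow_card_of_nonempty hAne]
            simp
          rw [← Finset.sum_filter, hset, ← Finset.sum_mul, hsum]
      _ = - ∑ e ∈ D, J2 e := by simp
  -- Step 3: U bound
  have hUb : ∑ e ∈ D, J2 e ≤ (∑ i : Fin (k + 2), ((d i : ℤ)) ^ 2) - (k + 1) := by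
    have h1D : (1 : ℕ) ∈ D :=
      Finset.mem_biUnion.2 ⟨0, Finset.mem_univ _, Nat.one_mem_divisors.2 (hdne 0)⟩
    have hsub : D.erase 1 ⊆ Finset.univ.biUnion
        (fun i : Fin (k + 2) => (d i).divisors.erase 1) := by
      intro e he
      obtain ⟨hne, heD⟩ := Finset.mem_erase.1 he
      obtain ⟨i, -, hi⟩ := Finset.mem_biUnion.1 heD
      exact Finset.mem_biUnion.2 ⟨i, Finset.mem_univ _, Finset.mem_erase.2 ⟨hne, hi⟩⟩
    have h2 : ∑ e ∈ D.erase 1, J2 e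
        ≤ ∑ i : Fin (k + 2), ∑ e ∈ (d i).divisors.erase 1, J2 e := by
      calc ∑ e ∈ D.erase 1, J2 e
          ≤ ∑ e ∈ Finset.univ.biUnion (fun i : Fin (k + 2) => (d i).divisors.erase 1), J2 e :=
            Finset.sum_le_sum_of_subset_of_nonneg hsub (fun e _ _ => J2_nonneg e)
        _ ≤ _ := sum_biUnion_le_int _ _ _ J2_nonneg
    have h3 : ∀ i : Fin (k + 2), ∑ e ∈ (d i).divisors.erase 1, J2 e = ((d i : ℤ)) ^ 2 - 1 := by
      intro i
      rw [Finset.sum_erase_eq_sub (Nat.one_mem_divisors.2 (hdne i)), J2_sum_divisors (hdne i),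
        J2_one]
    have h4 : ∑ e ∈ D, J2 e = J2 1 + ∑ e ∈ D.erase 1, J2 e :=
      (Finset.add_sum_erase _ _ h1D).symm
    have h5 : ∑ i : Fin (k + 2), ∑ e ∈ (d i).divisors.erase 1, J2 e
        = (∑ i : Fin (k + 2), ((d i : ℤ)) ^ 2) - (k + 2) := by
      rw [Finset.sum_congr rfl fun i _ => h3 i, Finset.sum_sub_distrib, Finset.sum_const,
        Finset.card_univ, Fintype.card_fin]
      push_cast
      ring
    rw [h4, J2_one]
    have := h5 ▸ h2
    linarith
  -- Step 4: m * ∏ ≥ ∑ dᵢ²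
  have hsp : ∑ i : Fin (k + 2), (d i) ^ 2 ≤ m * ∏ i, d i := by
    set L := d (Fin.last (k + 1)) with hL
    set P := ∏ i : Fin (k + 1), d i.castSucc with hP
    have hP2 : 2 ≤ P :=
      le_trans (hd2 _) (Finset.single_le_prod' (fun i _ => Nat.one_le_of_lt (hd2 _))
        (Finset.mem_univ (0 : Fin (k + 1))))
    have hsum : ∑ i : Fin (k + 1), d i.castSucc ≤ P := fin_sum_le_prod k _ (fun i => hd2 _)
    have hle : ∀ i : Fin (k + 1), d i.castSucc ≤ L := fun i => hmono (Fin.le_last _)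
    have hprodall : ∏ i : Fin (k + 2), d i = P * L := Fin.prod_univ_castSucc d
    rw [Fin.sum_univ_castSucc, hprodall]
    have hA : 2 * (∑ i : Fin (k + 1), (d i.castSucc) ^ 2) ≤ m * (P * L) := by
      calc 2 * (∑ i : Fin (k + 1), (d i.castSucc) ^ 2)
          ≤ 2 * (∑ i : Fin (k + 1), L * d i.castSucc) := by
            refine Nat.mul_le_mul_left _ (Finset.sum_le_sum fun i _ => ?_)
            have := hle i
            nlinarith
        _ = 2 * (L * ∑ i : Fin (k + 1), d i.castSucc) := by rw [← Finset.mul_sum]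
        _ ≤ 2 * (L * P) := by
            exact Nat.mul_le_mul_left _ (Nat.mul_le_mul_left _ hsum)
        _ = 2 * (P * L) := by ring
        _ ≤ m * (P * L) := Nat.mul_le_mul_right _ hm
    have hB : 2 * (d (Fin.last (k + 1))) ^ 2 ≤ m * (P * L) := by
      have : (2 * L) * L ≤ (m * P) * L := Nat.mul_le_mul_right _ hlast
      nlinarith
    linarith
  -- Step 5: combine
  have hcast : (∑ i : Fin (k + 2), ((d i : ℤ)) ^ 2) ≤ (m : ℤ) * ∏ i, ((d i : ℤ)) := by
    have h := hsp
    have : ((∑ i : Fin (k + 2), (d i) ^ 2 : ℕ) : ℤ) ≤ ((m * ∏ i, d i : ℕ) : ℤ) :=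
      Int.ofNat_le.2 h
    push_cast at this
    convert this using 2
  have hk : (0 : ℤ) ≤ (k : ℤ) := Int.natCast_nonneg k
  unfold Rval
  rw [key]
  linarith
end

section
/- For positive integers d₁,…,d_k and m ≥ 2 with 2 ≤ d₁ ≤ ⋯ ≤ d_k, k ≥ 2, and 2·d_k ≤ m·d₁⋯d_{k−1}, one has R(d₁,…,d_k;m) ≥ g_max², where g_max = max_{i<j} gcd(dᵢ,dⱼ), with R as defined. Moreover, equality holds if and only if k = 2, m = 2, and d₁ = d₂. -/
/-- `g_max(d₁,…,d_k) = max_{i<j} gcd(dᵢ,dⱼ)`. -/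
def gmax {k : ℕ} (d : Fin k → ℕ) : ℕ :=
  (Finset.univ.filter (fun p : Fin k × Fin k => p.1 < p.2)).sup
    (fun p => Nat.gcd (d p.1) (d p.2))

open Finset

lemma sum_totient_pair (n : ℕ) :
    ∑ x ∈ n.divisors ×ˢ n.divisors, Nat.totient x.1 * Nat.totient x.2 = n * n := by
  rw [Finset.sum_product, ← Finset.sum_mul_sum, Nat.sum_totient]

lemma sum_le_prod' {ι : Type*} (s : Finset ι) (f : ι → ℕ) (h2 : ∀ i ∈ s, 2 ≤ f i) :
    ∑ i ∈ s, f i ≤ ∏ i ∈ s, f i := by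
  induction s using Finset.cons_induction with
  | empty => simp
  | cons a s ha ih =>
    rw [Finset.sum_cons, Finset.prod_cons]
    rcases s.eq_empty_or_nonempty with rfl | ⟨b, hb⟩
    · simp
    · have hs : 2 ≤ ∏ i ∈ s, f i :=
        le_trans (h2 b (Finset.mem_cons_of_mem hb))
          (Finset.single_le_prod' (fun i hi => Nat.one_le_iff_ne_zero.mpr
            (by have := h2 i (Finset.mem_cons_of_mem hi); omega)) hb)
      have hih := ih (fun i hi => h2 i (Finset.mem_cons_of_mem hi))
      nlinarith [h2 a (Finset.mem_cons_self a s)]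

lemma negOneInnerSum {n : ℕ} (d : Fin n → ℕ) (x : ℕ × ℕ) (c : ℤ) (i0 : Fin n)
    (h1 : x.1 ∣ d i0) (h2 : x.2 ∣ d i0) :
    (∑ S ∈ Finset.univ.powerset.filter (fun S : Finset (Fin n) => S.Nonempty),
      (-1 : ℤ)^S.card * (if x.1 ∣ S.gcd d ∧ x.2 ∣ S.gcd d then c else 0))
      = -c := by
  set I : Finset (Fin n) := Finset.univ.filter (fun i => x.1 ∣ d i ∧ x.2 ∣ d i) with hI
  have hIne : I.Nonempty := ⟨i0, by simp [hI, h1, h2]⟩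
  simp_rw [mul_ite, mul_zero]
  rw [← Finset.sum_filter]
  have hset : (Finset.univ.powerset.filter (fun S : Finset (Fin n) => S.Nonempty)).filter
      (fun S => x.1 ∣ S.gcd d ∧ x.2 ∣ S.gcd d) = I.powerset.filter (fun S => S.Nonempty) := by
    ext S
    simp only [Finset.mem_filter, Finset.mem_powerset, Finset.subset_univ, true_and,
      Finset.dvd_gcd_iff]
    constructor
    · rintro ⟨hne, hA, hB⟩
      exact ⟨fun i hi => by simp [hI, hA i hi, hB i hi], hne⟩
    · rintro ⟨hsub, hne⟩
      refine ⟨hne, fun i hi => ?_, fun i hi => ?_⟩ <;>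
        · have := hsub hi; simp [hI] at this; tauto
  rw [hset, ← Finset.sum_mul]
  have hsplit := Finset.sum_filter_add_sum_filter_not I.powerset
    (fun S => S.Nonempty) (fun S => (-1 : ℤ)^S.card)
  have hempty : I.powerset.filter (fun S : Finset (Fin n) => ¬S.Nonempty) = {∅} := by
    ext S
    simp only [Finset.mem_filter, Finset.mem_powerset, Finset.not_nonempty_iff_eq_empty,
      Finset.mem_singleton, and_iff_right_iff_imp]
    exact fun h => h ▸ Finset.empty_subset I
  rw [hempty] at hsplit
  rw [Finset.sum_powerset_neg_one_pow_card_of_nonempty hIne] at hsplit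
  simp at hsplit
  have hval : (∑ S ∈ I.powerset.filter (fun S : Finset (Fin n) => S.Nonempty),
      (-1 : ℤ)^S.card) = -1 := by linarith
  rw [hval]
  ring

lemma Rval_eq_sub {n : ℕ} (d : Fin n → ℕ) (hd : ∀ i, 0 < d i) (m : ℕ) :
    Rval d m = (m : ℤ) * ∏ i, (d i : ℤ) -
      ((∑ x ∈ Finset.univ.biUnion
          (fun i : Fin n => (d i).divisors ×ˢ (d i).divisors),
        Nat.totient x.1 * Nat.totient x.2 : ℕ) : ℤ) := by
  set D : Finset (ℕ × ℕ) := Finset.univ.biUnion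
      (fun i : Fin n => (d i).divisors ×ˢ (d i).divisors) with hD
  have hmemD : ∀ x : ℕ × ℕ, x ∈ D ↔ ∃ i, x.1 ∣ d i ∧ x.2 ∣ d i := by
    intro x
    simp only [hD, Finset.mem_biUnion, Finset.mem_univ, true_and, Finset.mem_product,
      Nat.mem_divisors]
    constructor
    · rintro ⟨i, ⟨h1, _⟩, ⟨h2, _⟩⟩; exact ⟨i, h1, h2⟩
    · rintro ⟨i, h1, h2⟩; exact ⟨i, ⟨h1, (hd i).ne'⟩, ⟨h2, (hd i).ne'⟩⟩
  unfold Rval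
  rw [sub_eq_add_neg]
  congr 1
  have key : ∀ S ∈ Finset.univ.powerset.filter (fun S : Finset (Fin n) => S.Nonempty),
      (-1 : ℤ) ^ S.card * ((S.gcd d : ℕ) : ℤ) ^ 2 =
      ∑ x ∈ D, (-1 : ℤ) ^ S.card * (if x.1 ∣ S.gcd d ∧ x.2 ∣ S.gcd d
        then ((Nat.totient x.1 * Nat.totient x.2 : ℕ) : ℤ) else 0) := by
    intro S hS
    rw [← Finset.mul_sum]
    congr 1
    rw [Finset.mem_filter] at hS
    obtain ⟨i0, hi0⟩ := hS.2
    have hGdvd : S.gcd d ∣ d i0 := Finset.gcd_dvd hi0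
    have hGne : S.gcd d ≠ 0 := by
      intro h
      exact (hd i0).ne' (Finset.gcd_eq_zero_iff.1 h i0 hi0)
    rw [Finset.sum_ite, Finset.sum_const_zero, add_zero]
    have hset : D.filter (fun x => x.1 ∣ S.gcd d ∧ x.2 ∣ S.gcd d)
        = (S.gcd d).divisors ×ˢ (S.gcd d).divisors := by
      ext x
      simp only [Finset.mem_filter, Finset.mem_product, Nat.mem_divisors, hmemD]
      constructor
      · rintro ⟨_, h1, h2⟩; exact ⟨⟨h1, hGne⟩, ⟨h2, hGne⟩⟩
      · rintro ⟨⟨h1, _⟩, ⟨h2, _⟩⟩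
        exact ⟨⟨i0, h1.trans hGdvd, h2.trans hGdvd⟩, h1, h2⟩
    rw [hset, ← Nat.cast_sum, sum_totient_pair]
    push_cast
    ring
  rw [Finset.sum_congr rfl key, Finset.sum_comm]
  have innerEq : ∀ x ∈ D,
      (∑ S ∈ Finset.univ.powerset.filter (fun S : Finset (Fin n) => S.Nonempty),
        (-1 : ℤ)^S.card * (if x.1 ∣ S.gcd d ∧ x.2 ∣ S.gcd d
          then ((Nat.totient x.1 * Nat.totient x.2 : ℕ) : ℤ) else 0))
      = -((Nat.totient x.1 * Nat.totient x.2 : ℕ) : ℤ) := by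
    intro x hx
    obtain ⟨i0, h1, h2⟩ := (hmemD x).1 hx
    exact negOneInnerSum d x _ i0 h1 h2
  rw [Finset.sum_congr rfl innerEq]
  push_cast
  rw [← Finset.sum_neg_distrib]

lemma W_add_sq_le {n : ℕ} (d : Fin n → ℕ) (hd : ∀ i, 0 < d i) (p q : Fin n) (hpq : p ≠ q) :
    (∑ x ∈ Finset.univ.biUnion (fun i : Fin n => (d i).divisors ×ˢ (d i).divisors),
      Nat.totient x.1 * Nat.totient x.2) + Nat.gcd (d p) (d q) ^ 2 ≤ ∑ i, d i ^ 2 := by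
  set w : ℕ × ℕ → ℕ := fun x => Nat.totient x.1 * Nat.totient x.2 with hw
  set A : Fin n → Finset (ℕ × ℕ) := fun i => (d i).divisors ×ˢ (d i).divisors with hA
  set D : Finset (ℕ × ℕ) := Finset.univ.biUnion A with hD
  set g : ℕ := Nat.gcd (d p) (d q) with hg
  set B : Finset (ℕ × ℕ) := g.divisors ×ˢ g.divisors with hB
  have hAD : ∀ i, A i ⊆ D := fun i => Finset.subset_biUnion_of_mem A (Finset.mem_univ i)
  have hBA : ∀ r : Fin n, g ∣ d r → B ⊆ A r := by
    intro r hr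
    exact Finset.product_subset_product (Nat.divisors_subset_of_dvd (hd r).ne' hr)
      (Nat.divisors_subset_of_dvd (hd r).ne' hr)
  have hBp : B ⊆ A p := hBA p (Nat.gcd_dvd_left _ _)
  have hBq : B ⊆ A q := hBA q (Nat.gcd_dvd_right _ _)
  have hsumA : ∀ i, ∑ x ∈ D, (if x ∈ A i then w x else 0) = d i ^ 2 := by
    intro i
    rw [Finset.sum_ite_mem, Finset.inter_eq_right.mpr (hAD i)]
    rw [hw, hA, sum_totient_pair, sq]
  have hsumB : ∑ x ∈ D, (if x ∈ B then w x else 0) = g ^ 2 := by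
    rw [Finset.sum_ite_mem, Finset.inter_eq_right.mpr (hBp.trans (hAD p)),
      hw, hB, sum_totient_pair, sq]
  have hpt : ∀ x ∈ D, w x + (if x ∈ B then w x else 0)
      ≤ ∑ i : Fin n, (if x ∈ A i then w x else 0) := by
    intro x hx
    by_cases hxB : x ∈ B
    · have hsub : ({p, q} : Finset (Fin n)) ⊆ Finset.univ := Finset.subset_univ _
      calc w x + (if x ∈ B then w x else 0) = w x + w x := by rw [if_pos hxB]
        _ = ∑ i ∈ ({p, q} : Finset (Fin n)), (if x ∈ A i then w x else 0) := by
            rw [Finset.sum_pair hpq, if_pos (hBp hxB), if_pos (hBq hxB)]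
        _ ≤ _ := Finset.sum_le_sum_of_subset hsub
    · obtain ⟨i0, _, hi0⟩ := Finset.mem_biUnion.1 hx
      rw [if_neg hxB, add_zero]
      calc w x = (if x ∈ A i0 then w x else 0) := by rw [if_pos hi0]
        _ ≤ _ := Finset.single_le_sum (f := fun i => if x ∈ A i then w x else 0)
            (fun i _ => Nat.zero_le _) (Finset.mem_univ i0)
  calc (∑ x ∈ D, w x) + g ^ 2
      = ∑ x ∈ D, (w x + (if x ∈ B then w x else 0)) := by
        rw [Finset.sum_add_distrib, hsumB]
    _ ≤ ∑ x ∈ D, ∑ i : Fin n, (if x ∈ A i then w x else 0) := Finset.sum_le_sum hpt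
    _ = ∑ i : Fin n, ∑ x ∈ D, (if x ∈ A i then w x else 0) := Finset.sum_comm
    _ = ∑ i, d i ^ 2 := Finset.sum_congr rfl (fun i _ => hsumA i)

lemma sum_sq_lt {n : ℕ} (hn : 2 ≤ n) (m : ℕ) (hm : 2 ≤ m) (d : Fin (n+1) → ℕ)
    (h2 : ∀ i, 2 ≤ d i) (hmono : Monotone d)
    (hlast : 2 * d (Fin.last n) ≤ m * ∏ i : Fin n, d i.castSucc) :
    ∑ i, d i ^ 2 < m * ∏ i, d i := by
  set L : ℕ := d (Fin.last n) with hL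
  set P : ℕ := ∏ i : Fin n, d i.castSucc with hP
  set T : ℕ := ∑ i : Fin n, d i.castSucc with hT
  set S : ℕ := ∑ i : Fin n, d i.castSucc ^ 2 with hS
  have prod_split : ∏ i, d i = P * L := Fin.prod_univ_castSucc d
  have sum_split : ∑ i, d i ^ 2 = S + L ^ 2 := Fin.sum_univ_castSucc (fun i => d i ^ 2)
  have hdL : ∀ i : Fin n, d i.castSucc ≤ L := fun i => hmono (Fin.le_last _)
  have hTP : T ≤ P := sum_le_prod' _ _ (fun i _ => h2 _)
  have hSLT : S ≤ L * T := by
    rw [hS, hT, Finset.mul_sum]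
    exact Finset.sum_le_sum (fun i _ => by
      rw [sq]; exact Nat.mul_le_mul_right _ (hdL i))
  have hPpos : 0 < P := Finset.prod_pos (fun i _ => lt_of_lt_of_le two_pos (h2 _))
  have hLpos : 0 < L := lt_of_lt_of_le two_pos (h2 _)
  by_contra hcon
  push_neg at hcon
  rw [prod_split, sum_split] at hcon
  have key1 : 2 * (L * P) ≤ m * (P * L) := by nlinarith [Nat.mul_le_mul_right (P * L) hm]
  have key2 : 2 * (L * L) ≤ m * (P * L) := by nlinarith [Nat.mul_le_mul_right L hlast]
  have hSLP : S ≤ L * P := hSLT.trans (Nat.mul_le_mul_left _ hTP)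
  rw [sq] at hcon
  have hES : S = L * P := by omega
  have hELL : 2 * (L * L) = m * (P * L) := by omega
  have hELP : 2 * (L * P) = m * (P * L) := by omega
  have hPL : P = L := Nat.eq_of_mul_eq_mul_left hLpos (by omega)
  have hLTLP : L * T = L * P := le_antisymm (Nat.mul_le_mul_left _ hTP) (by omega)
  have hSeq : S = L * T := by omega
  have hall : ∀ i : Fin n, d i.castSucc = L := by
    intro i
    have := (Finset.sum_eq_sum_iff_of_le
      (s := (Finset.univ : Finset (Fin n))) (f := fun i => d i.castSucc ^ 2)
      (g := fun i => L * d i.castSucc)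
      (fun i _ => by rw [sq]; exact Nat.mul_le_mul_right _ (hdL i))).1
      (by rw [← hS, hSeq, hT, Finset.mul_sum]) i (Finset.mem_univ i)
    have hdpos : 0 < d i.castSucc := lt_of_lt_of_le two_pos (h2 _)
    rw [sq] at this
    exact Nat.eq_of_mul_eq_mul_right hdpos (by linarith [this])
  have hPLn : P = L ^ n := by
    rw [hP, Finset.prod_congr rfl (fun i _ => hall i), Finset.prod_const,
      Finset.card_univ, Fintype.card_fin]
  have hpow : L ^ 2 ≤ L ^ n := Nat.pow_le_pow_right hLpos hn
  rw [sq] at hpow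
  have : L * L ≤ L := by omega
  nlinarith [h2 (Fin.last n)]

set_option maxHeartbeats 1000000 in
theorem stmt3 (k m : ℕ) (hm : 2 ≤ m) (d : Fin (k + 2) → ℕ)
    (hd : 2 ≤ d 0) (hmono : Monotone d)
    (hlast : 2 * d (Fin.last (k + 1)) ≤ m * ∏ i : Fin (k + 1), d i.castSucc) :
    ((gmax d : ℤ)) ^ 2 ≤ Rval d m ∧
      (Rval d m = ((gmax d : ℤ)) ^ 2 ↔ (k = 0 ∧ m = 2 ∧ ∀ i j, d i = d j)) := by
  have h2i : ∀ i, 2 ≤ d i := fun i => le_trans hd (hmono (Fin.zero_le i))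
  have hdpos : ∀ i, 0 < d i := fun i => lt_of_lt_of_le two_pos (h2i i)
  -- the maximal pair
  have hfne : (Finset.univ.filter
      (fun p : Fin (k+2) × Fin (k+2) => p.1 < p.2)).Nonempty := by
    refine ⟨(0, 1), ?_⟩
    simp only [Finset.mem_filter, Finset.mem_univ, true_and]
    rw [Fin.lt_def]
    simp [Fin.val_one]
  obtain ⟨pq, hpqmem, hgsup⟩ := Finset.exists_mem_eq_sup _ hfne
    (fun p : Fin (k+2) × Fin (k+2) => Nat.gcd (d p.1) (d p.2))
  have hpqlt : pq.1 < pq.2 := (Finset.mem_filter.1 hpqmem).2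
  have hpqne : pq.1 ≠ pq.2 := ne_of_lt hpqlt
  have hgval : gmax d = Nat.gcd (d pq.1) (d pq.2) := hgsup
  set W : ℕ := ∑ x ∈ Finset.univ.biUnion
      (fun i : Fin (k+2) => (d i).divisors ×ˢ (d i).divisors),
      Nat.totient x.1 * Nat.totient x.2 with hW
  have bound1 : W + gmax d ^ 2 ≤ ∑ i, d i ^ 2 := by
    rw [hgval]; exact W_add_sq_le d hdpos pq.1 pq.2 hpqne
  have Rident : Rval d m = (m : ℤ) * ∏ i, (d i : ℤ) - (W : ℤ) := Rval_eq_sub d hdpos m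
  have hprodcast : ∏ i, ((d i : ℤ)) = ((∏ i, d i : ℕ) : ℤ) := by push_cast; rfl
  -- non-strict bound: ∑ d² ≤ m * ∏ d
  have bound2 : ∑ i, d i ^ 2 ≤ m * ∏ i, d i := by
    obtain rfl | ⟨j, rfl⟩ : k = 0 ∨ ∃ j, k = j + 1 := by
      cases k
      · exact Or.inl rfl
      · exact Or.inr ⟨_, rfl⟩
    · -- k = 0 : two variables
      have hsum : ∑ i, d i ^ 2 = d 0 ^ 2 + d 1 ^ 2 := Fin.sum_univ_two _
      have hprod : ∏ i, d i = d 0 * d 1 := Fin.prod_univ_two _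
      have hlast' : 2 * d 1 ≤ m * d 0 := by
        have h1 : ∏ i : Fin 1, d i.castSucc = d 0 := Fin.prod_univ_one _
        have h2 : d (Fin.last 1) = d 1 := rfl
        rw [h1, h2] at hlast
        exact hlast
      have h01 : d 0 ≤ d 1 := hmono (by norm_num [Fin.le_def, Fin.val_one])
      rw [hsum, hprod]
      nlinarith [Nat.mul_le_mul_right (d 1) hlast', Nat.mul_le_mul h01 h01]
    · exact le_of_lt (sum_sq_lt (by omega) m hm d h2i hmono hlast)
  constructor
  · -- the inequality
    rw [Rident, hprodcast]
    have hc : ((W + gmax d ^ 2 : ℕ) : ℤ) ≤ ((m * ∏ i, d i : ℕ) : ℤ) := by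
      exact_mod_cast le_trans bound1 bound2
    push_cast at hc ⊢
    linarith
  · constructor
    · -- equality ⇒ k = 0, m = 2, d constant
      intro heq
      rw [Rident] at heq
      have hNat : m * ∏ i, d i = W + gmax d ^ 2 := by
        have h' : ((m * ∏ i, d i : ℕ) : ℤ) = ((W + gmax d ^ 2 : ℕ) : ℤ) := by
          push_cast
          linarith
        exact_mod_cast h'
      have hle : m * ∏ i, d i ≤ ∑ i, d i ^ 2 := hNat ▸ bound1
      obtain rfl | ⟨j, rfl⟩ : k = 0 ∨ ∃ j, k = j + 1 := by
        cases k
        · exact Or.inl rfl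
        · exact Or.inr ⟨_, rfl⟩
      swap
      · exact absurd hle (not_le.mpr (sum_sq_lt (by omega) m hm d h2i hmono hlast))
      · -- two variables
        have hsum : ∑ i, d i ^ 2 = d 0 ^ 2 + d 1 ^ 2 := Fin.sum_univ_two _
        have hprod : ∏ i, d i = d 0 * d 1 := Fin.prod_univ_two _
        have hlast' : 2 * d 1 ≤ m * d 0 := by
          have h1 : ∏ i : Fin 1, d i.castSucc = d 0 := Fin.prod_univ_one _
          rw [h1] at hlast
          exact hlast
        have h01 : d 0 ≤ d 1 := hmono (by norm_num [Fin.le_def, Fin.val_one])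
        rw [hsum, hprod] at hle
        have hba : 2 * (d 1 * d 1) ≤ m * (d 0 * d 1) := by
          nlinarith [Nat.mul_le_mul_right (d 1) hlast']
        have hsq : d 1 * d 1 ≤ d 0 * d 0 := by nlinarith [hdpos 0, hdpos 1]
        have h10 : d 1 ≤ d 0 := by nlinarith [hdpos 0, hdpos 1]
        have hdeq : d 0 = d 1 := le_antisymm h01 h10
        have hm2 : m = 2 := by nlinarith [hdpos 0, hdpos 1]
        refine ⟨rfl, hm2, fun i j => ?_⟩
        have hconst : ∀ i : Fin (0 + 2), d i = d 0 := by
          intro i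
          refine le_antisymm ?_ (hmono (Fin.zero_le i))
          calc d i ≤ d (Fin.last 1) := hmono (Fin.le_last i)
            _ = d 1 := rfl
            _ = d 0 := hdeq.symm
        rw [hconst i, hconst j]
    · -- converse
      rintro ⟨rfl, rfl, hconst⟩
      set c : ℕ := d 0 with hc
      have hDeq : Finset.univ.biUnion
          (fun i : Fin (0+2) => (d i).divisors ×ˢ (d i).divisors)
          = c.divisors ×ˢ c.divisors := by
        ext x
        simp only [Finset.mem_biUnion, Finset.mem_univ, true_and]
        constructor
        · rintro ⟨i, hi⟩; rwa [hconst i 0] at hi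
        · intro hx; exact ⟨0, hx⟩
      have hWeq : W = c * c := by rw [hW, hDeq, sum_totient_pair]
      have hprodc : ∏ i, d i = c * c := by
        rw [Fin.prod_univ_two, hconst 1 0]
      have hgmax : gmax d = c := by
        unfold gmax
        rw [Finset.sup_congr rfl (fun p _ => by
          rw [hconst p.1 0, hconst p.2 0, Nat.gcd_self])]
        exact Finset.sup_const hfne c
      rw [Rident, hprodcast, hprodc, hWeq, hgmax]
      push_cast
      ring
end

section
/- Let F be a field. If X ⊆ Fᵐ and Y ⊆ Fⁿ are affine F-varieties (zero loci of polynomial collections), then the projection map π : X × Y → X is open with respect to the Zariski topology. -/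
lemma eval_subst {F : Type*} [Field F] {m n : ℕ} (x : Fin m → F) (y : Fin n → F)
    (p : MvPolynomial (Fin m ⊕ Fin n) F) :
    MvPolynomial.eval x
      (MvPolynomial.aeval (Sum.elim MvPolynomial.X (fun j => MvPolynomial.C (y j))) p)
      = MvPolynomial.eval (Sum.elim x y) p := by
  induction p using MvPolynomial.induction_on with
  | C a => simp
  | add p q hp hq => simp only [map_add, MvPolynomial.eval_add, hp, hq]
  | mul_X p i hp => cases i <;> simp only [map_mul, MvPolynomial.eval_mul, hp, MvPolynomial.aeval_X, Sum.elim_inl, Sum.elim_inr, MvPolynomial.eval_X, MvPolynomial.eval_C]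

theorem stmt12 {F : Type*} [Field F] {m n : ℕ}
    (X : Set (Fin m → F)) (Y : Set (Fin n → F))
    (hX : ∃ I : Set (MvPolynomial (Fin m) F),
      X = {x | ∀ p ∈ I, MvPolynomial.eval x p = 0})
    (hY : ∃ J : Set (MvPolynomial (Fin n) F),
      Y = {y | ∀ p ∈ J, MvPolynomial.eval y p = 0})
    (P : Set (MvPolynomial (Fin m ⊕ Fin n) F)) :
    ∃ Q : Set (MvPolynomial (Fin m) F),
      {x ∈ X | ∃ y ∈ Y, ¬ ∀ p ∈ P, MvPolynomial.eval (Sum.elim x y) p = 0}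
        = X \ {x | ∀ q ∈ Q, MvPolynomial.eval x q = 0} := by
  refine ⟨{q | ∃ p ∈ P, ∃ y ∈ Y,
    q = MvPolynomial.aeval (Sum.elim MvPolynomial.X (fun j => MvPolynomial.C (y j))) p}, ?_⟩
  ext x
  simp only [Set.mem_setOf_eq, Set.mem_diff, Set.mem_sep_iff]
  constructor
  · rintro ⟨hx, y, hy, h⟩
    push_neg at h
    obtain ⟨p, hp, hne⟩ := h
    exact ⟨hx, fun h => hne (by rw [← eval_subst]; exact h _ ⟨p, hp, y, hy, rfl⟩)⟩
  · rintro ⟨hx, h⟩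
    refine ⟨hx, ?_⟩
    push_neg at h ⊢
    obtain ⟨q, ⟨p, hp, y, hy, rfl⟩, hne⟩ := h
    exact ⟨y, hy, p, hp, by rwa [eval_subst] at hne⟩
end
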